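/- Let k ≥ 3, C = ⟨ζ⟩ ⊂ ℂ^× the group of k-th roots of unity, G a finite group acting transitively on {1,...,n} with H the stabilizer of 1, and W = C^n ⋊ G the wreath product. Let χ : C^n ⋊ H → ℂ^× be the character (a_1,...,a_n,h) ↦ a_1, and ρ = Ind_{C^n⋊H}^W(χ). Then the n character eigenspaces of the restriction of ρ to C^n form the unique monomial structure on ρ. -/

import Mathlib

set_option linter.unusedSectionVars false
set_option synthInstance.maxHeartbeats 1000000
set_option maxHeartbeats 2000000

namespace Stmt10

open SemidirectProduct Submodule

variable {n : ℕ} {G : Type*} [Group G] [MulAction G (Fin n)]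
  {C : Subgroup ℂˣ} {φ : G →* MulAut (Fin n → C)}

abbrev Wp (φ : G →* MulAut (Fin n → C)) : Type _ := (Fin n → C) ⋊[φ] G

variable (K : Subgroup (Wp φ)) (χ : K →* ℂˣ)

noncomputable def V : Submodule ℂ (Wp φ → ℂ) where
  carrier := {f | ∀ (u : K) (w : Wp φ), f (↑u * w) = (χ u : ℂ) * f w}
  add_mem' := by intro f g hf hg u w; simp only [Pi.add_apply, hf u w, hg u w]; ring
  zero_mem' := by intro u w; simp
  smul_mem' := by intro c f hf u w; simp only [Pi.smul_apply, smul_eq_mul, hf u w]; ring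

noncomputable def ρ : Representation ℂ (Wp φ) (V K χ) where
  toFun w :=
    { toFun := fun f => ⟨fun x => (f : Wp φ → ℂ) (x * w), fun u x => by
        simp only []; rw [mul_assoc]; exact f.2 u (x * w)⟩
      map_add' := fun f g => rfl
      map_smul' := fun c f => rfl }
  map_one' := by
    apply LinearMap.ext; intro f; apply Subtype.ext; funext x; simp
  map_mul' := fun w₁ w₂ => by
    apply LinearMap.ext; intro f; apply Subtype.ext; funext x
    show (f : Wp φ → ℂ) (x * (w₁ * w₂)) = (f : Wp φ → ℂ) (x * w₁ * w₂)
    rw [mul_assoc]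

noncomputable def ev (σ : Fin n → G) (i : Fin n) : V K χ →ₗ[ℂ] ℂ :=
  (LinearMap.proj (inr (σ i)⁻¹ : Wp φ)).comp (V K χ).subtype

lemma ev_apply (σ : Fin n → G) (i : Fin n) (f : V K χ) :
    ev K χ σ i f = (f : Wp φ → ℂ) (inr (σ i)⁻¹) := rfl

def fFf (p i : Fin n) : Wp φ → ℂ :=
  fun x => if x.right⁻¹ • p = i then ((x.left p : ℂˣ) : ℂ) else 0

end Stmt10
open Stmt10 SemidirectProduct Submodule Module in
/-- Let `k ≥ 3`, `C ⊂ ℂ^×` the group of `k`-th roots of unity, `G` a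
finite group acting transitively on `{1,…,n}` with `H` the stabilizer of the first point,
and `W = C^n ⋊ G` the wreath product.  Let `χ : C^n ⋊ H → ℂ^×` be the character
`(a₁,…,aₙ,h) ↦ a₁` and `ρ = Ind_{C^n ⋊ H}^W χ`, realized on the space `V` of functions
`f : W → ℂ` with `f (u * w) = χ u * f w`, with `W` acting by right translation.
Then the `1`-dimensional `C^n`-invariant subspaces (the character eigenspaces of `C^n`)
form the unique monomial structure on `ρ`: a set `M` of submodules of `V` is a monomial
structure (lines, `W`-stable, direct sum everything) iff it equals that set. -/
theorem stmt10 (k n : ℕ) (hk : 3 ≤ k) (hn : 0 < n)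
    (G : Type*) [Group G] [Finite G] [MulAction G (Fin n)]
    [MulAction.IsPretransitive G (Fin n)]
    (C : Subgroup ℂˣ) (hC : ∀ z : ℂˣ, z ∈ C ↔ z ^ k = 1)
    (φ : G →* MulAut (Fin n → C))
    (hφ : ∀ (g : G) (a : Fin n → C) (i : Fin n), φ g a i = a (g⁻¹ • i))
    (H : Subgroup G) (hH : H = MulAction.stabilizer G (⟨0, hn⟩ : Fin n))
    (K : Subgroup ((Fin n → C) ⋊[φ] G))
    (hK : K = Subgroup.comap SemidirectProduct.rightHom H)
    (χ : K →* ℂˣ)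
    (hχ : ∀ w : K, χ w = ((w : (Fin n → C) ⋊[φ] G).left ⟨0, hn⟩ : ℂˣ)) :
    ∃ (V : Submodule ℂ (((Fin n → C) ⋊[φ] G) → ℂ))
      (ρ : Representation ℂ ((Fin n → C) ⋊[φ] G) V),
      (∀ f, f ∈ V ↔ ∀ (u : K) (w : (Fin n → C) ⋊[φ] G),
        f (↑u * w) = (χ u : ℂ) * f w) ∧
      (∀ (w : (Fin n → C) ⋊[φ] G) (f : V) (x : (Fin n → C) ⋊[φ] G),
        ((ρ w f : _ → ℂ) x) = (f : _ → ℂ) (x * w)) ∧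
      (∀ M : Set (Submodule ℂ V), ∀ _ : DecidableEq ↥M,
        ((∀ L ∈ M, Module.finrank ℂ L = 1) ∧
         (∀ (w : (Fin n → C) ⋊[φ] G), ∀ L ∈ M, Submodule.map (ρ w) L ∈ M) ∧
         DirectSum.IsInternal (fun L : M => (L : Submodule ℂ V)))
        ↔ M = {L : Submodule ℂ V | Module.finrank ℂ L = 1 ∧
            ∀ a : Fin n → C, Submodule.map (ρ (SemidirectProduct.inl a)) L = L}) := by
  classical
  refine ⟨Stmt10.V K χ, Stmt10.ρ K χ, fun f => Iff.rfl, fun w f x => rfl, ?_⟩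
  set z0 : Fin n := ⟨0, hn⟩ with hz0
  obtain ⟨σ, hσ⟩ : ∃ σ : Fin n → G, ∀ i, σ i • z0 = i :=
    ⟨fun i => (MulAction.exists_smul_eq G z0 i).choose,
     fun i => (MulAction.exists_smul_eq G z0 i).choose_spec⟩
  -- a primitive k-th root of unity inside C
  obtain ⟨ζ, hζmem, hζ1, hζ2, hζ0⟩ :
      ∃ ζ : ℂˣ, ζ ∈ C ∧ ((ζ : ℂ) ≠ 1) ∧ ((ζ : ℂ) ^ 2 ≠ 1) ∧ ((ζ : ℂ) ≠ 0) := by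
    have hk0 : k ≠ 0 := by omega
    have hprim := Complex.isPrimitiveRoot_exp k hk0
    have hu := hprim.isUnit (by omega)
    refine ⟨hu.unit, ?_, ?_, ?_, ?_⟩
    · rw [hC]
      ext
      rw [Units.val_pow_eq_pow_val, hu.unit_spec, Units.val_one]
      exact hprim.pow_eq_one
    · rw [hu.unit_spec]; exact hprim.ne_one (by omega)
    · rw [hu.unit_spec]; exact hprim.pow_ne_one_of_pos_of_lt (by omega) (by omega)
    · rw [hu.unit_spec]; exact hu.ne_zero
  set ζC : C := ⟨ζ, hζmem⟩ with hζC
  -- evaluation functionals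
  set ev : Fin n → (Stmt10.V K χ →ₗ[ℂ] ℂ) := fun i => Stmt10.ev K χ σ i with hev
  -- evaluation formula for elements of V
  have heval : ∀ f : Wp φ → ℂ, f ∈ Stmt10.V K χ → ∀ x : Wp φ,
      f x = ((x.left z0 : ℂˣ) : ℂ) * f (inr (σ (x.right⁻¹ • z0))⁻¹) := by
    intro f hf x
    have h1 : (inl x.left : Wp φ) ∈ K := by
      rw [hK, Subgroup.mem_comap]
      simpa using H.one_mem
    have e1 : f x = ((x.left z0 : ℂˣ) : ℂ) * f (inr x.right) := by
      have h2 := hf ⟨_, h1⟩ (inr x.right)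
      rw [hχ ⟨_, h1⟩] at h2
      simpa using h2
    have hj : (x.right * σ (x.right⁻¹ • z0)) • z0 = z0 := by
      rw [mul_smul, hσ, smul_inv_smul]
    have h3 : (inr (x.right * σ (x.right⁻¹ • z0)) : Wp φ) ∈ K := by
      rw [hK, Subgroup.mem_comap, hH]
      simpa [MulAction.mem_stabilizer_iff] using hj
    have e2 : f (inr x.right) = f (inr (σ (x.right⁻¹ • z0))⁻¹) := by
      have h4 := hf ⟨_, h3⟩ (inr (σ (x.right⁻¹ • z0))⁻¹)
      rw [hχ ⟨_, h3⟩] at h4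
      have h5 : (inr (x.right * σ (x.right⁻¹ • z0)) : Wp φ) * inr (σ (x.right⁻¹ • z0))⁻¹
          = inr x.right := by
        rw [← map_mul, mul_inv_cancel_right]
      simpa [h5] using h4
    rw [e1, e2]
  -- extensionality by evaluations
  have hextv : ∀ f g : Stmt10.V K χ, (∀ i, ev i f = ev i g) → f = g := by
    intro f g h
    apply Subtype.ext; funext x
    have hx := h (x.right⁻¹ • z0)
    rw [hev] at hx
    simp only [Stmt10.ev_apply] at hx
    rw [heval f.1 f.2 x, heval g.1 g.2 x, hx]
  -- the basis vectors
  have hFmem : ∀ i, Stmt10.fFf z0 i ∈ Stmt10.V K χ := by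
    intro i u w
    have hu : (u : Wp φ).right ∈ H := by
      have h0 : ∀ y : Wp φ, y ∈ K → y.right ∈ H := by
        intro y hy; rw [hK, Subgroup.mem_comap] at hy; exact hy
      exact h0 _ u.2
    have hup : ((u : Wp φ).right)⁻¹ • z0 = z0 := by
      rw [hH, MulAction.mem_stabilizer_iff] at hu
      rw [inv_smul_eq_iff]; exact hu.symm
    have hcond : ((u : Wp φ) * w).right⁻¹ • z0 = w.right⁻¹ • z0 := by
      rw [mul_right, mul_inv_rev, mul_smul, hup]
    have hval : ((u : Wp φ) * w).left z0 = (u : Wp φ).left z0 * w.left z0 := by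
      rw [mul_left, Pi.mul_apply, hφ, hup]
    rw [hχ u]
    show (if ((u : Wp φ) * w).right⁻¹ • z0 = i then ((((u : Wp φ) * w).left z0 : ℂˣ) : ℂ) else 0)
      = _ * (if w.right⁻¹ • z0 = i then ((w.left z0 : ℂˣ) : ℂ) else 0)
    rw [hcond, hval]
    split_ifs
    · push_cast; ring
    · ring
  set F : Fin n → Stmt10.V K χ := fun i => ⟨Stmt10.fFf z0 i, hFmem i⟩ with hF
  set LL : Fin n → Submodule ℂ (Stmt10.V K χ) := fun i => ℂ ∙ (F i) with hLL
  -- evaluations of the basis vectors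
  have hevF : ∀ j i, ev j (F i) = if j = i then 1 else 0 := by
    intro j i
    rw [hev]
    show Stmt10.fFf z0 i (inr (σ j)⁻¹) = _
    simp [Stmt10.fFf, hσ j]
  -- the action on basis vectors
  have hρF : ∀ (w : Wp φ) (i : Fin n),
      Stmt10.ρ K χ w (F i) = (((w.left (w.right • i) : ℂˣ)) : ℂ) • F (w.right • i) := by
    intro w i
    apply Subtype.ext; funext x
    show Stmt10.fFf z0 i (x * w) = _
    have hcond : ((x * w).right⁻¹ • z0 = i) ↔ (x.right⁻¹ • z0 = w.right • i) := by
      rw [mul_right, mul_inv_rev, mul_smul, inv_smul_eq_iff]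
    have hrhs : ((((w.left (w.right • i) : ℂˣ)) : ℂ) • F (w.right • i) : Stmt10.V K χ).1 x
        = (((w.left (w.right • i) : ℂˣ)) : ℂ) *
          (if x.right⁻¹ • z0 = w.right • i then ((x.left z0 : ℂˣ) : ℂ) else 0) := rfl
    rw [hrhs]
    show (if (x * w).right⁻¹ • z0 = i then (((x * w).left z0 : ℂˣ) : ℂ) else 0) = _
    by_cases hc : x.right⁻¹ • z0 = w.right • i
    · rw [if_pos (hcond.mpr hc), if_pos hc]
      have hval : (x * w).left z0 = x.left z0 * w.left (w.right • i) := by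
        rw [mul_left, Pi.mul_apply, hφ, hc]
      rw [hval]; push_cast; ring
    · rw [if_neg (fun h => hc (hcond.mp h)), if_neg hc, mul_zero]
  -- evaluations after the torus action
  have hevρ : ∀ (a : Fin n → C) (f : Stmt10.V K χ) (m : Fin n),
      ev m (Stmt10.ρ K χ (inl a) f) = ((a m : ℂˣ) : ℂ) * ev m f := by
    intro a f m
    rw [hev]
    show (f : Wp φ → ℂ) (inr (σ m)⁻¹ * inl a) = _ * (f : Wp φ → ℂ) (inr (σ m)⁻¹)
    rw [heval f.1 f.2 (inr (σ m)⁻¹ * inl a)]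
    simp only [mul_right, right_inr, right_inl, mul_one, mul_left, left_inr, left_inl, one_mul,
      inv_inv, hφ, hσ m]
  have hFne : ∀ i, F i ≠ 0 := by
    intro i h
    have h1 := hevF i i
    rw [h, if_pos rfl, map_zero] at h1
    exact zero_ne_one h1
  have hfinLL : ∀ i, finrank ℂ (LL i) = 1 := fun i => finrank_span_singleton (hFne i)
  have hmapLL : ∀ (w : Wp φ) (i : Fin n),
      Submodule.map (Stmt10.ρ K χ w) (LL i) = LL (w.right • i) := by
    intro w i
    rw [hLL]
    show Submodule.map (Stmt10.ρ K χ w) (ℂ ∙ (F i)) = _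
    rw [Submodule.map_span, Set.image_singleton, hρF w i]
    exact span_singleton_smul_eq (Units.isUnit _) _
  have hsingle : ∀ (f : Stmt10.V K χ) (i : Fin n),
      (∀ j, j ≠ i → ev j f = 0) → f = ev i f • F i := by
    intro f i hj
    apply hextv
    intro m
    rw [map_smul, hevF m i, smul_eq_mul]
    by_cases hm : m = i
    · rw [if_pos hm, mul_one, hm]
    · rw [if_neg hm, mul_zero, hj m hm]
  have hrepr : ∀ f : Stmt10.V K χ, f = ∑ i, ev i f • F i := by
    intro f
    apply hextv
    intro m
    rw [map_sum]
    simp only [map_smul, hevF, smul_eq_mul, mul_ite, mul_one, mul_zero]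
    rw [Finset.sum_ite_eq Finset.univ m (fun i => ev i f)]
    simp
  have hLI : LinearIndependent ℂ F := by
    rw [Fintype.linearIndependent_iff]
    intro c hc j
    have h1 := congrArg (ev j) hc
    rw [map_sum, map_zero] at h1
    simpa [map_smul, hevF, Finset.sum_ite_eq Finset.univ j] using h1
  have hLLindep : iSupIndep LL := hLI.iSupIndep_span_singleton
  -- classification of invariant lines
  have htail : ∀ (L : Submodule ℂ ↥(Stmt10.V K χ)) (v : ↥(Stmt10.V K χ)), L = (ℂ ∙ v) →
      ∀ i, ev i v ≠ 0 → (∀ j, j ≠ i → ev j v = 0) → L = LL i := by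
    intro L v hLs i hi hji
    rw [hLs, hsingle v i hji, hLL]
    exact span_singleton_smul_eq (isUnit_iff_ne_zero.mpr hi) _
  have hgen : ∀ L : Submodule ℂ ↥(Stmt10.V K χ), finrank ℂ ↥L = 1 →
      ∃ v : ↥(Stmt10.V K χ), v ≠ 0 ∧ v ∈ L ∧ L = (ℂ ∙ v) ∧ ∃ i, ev i v ≠ 0 := by
    intro L hL
    haveI : Module.Free ℂ ↥L := Module.Free.of_divisionRing ℂ ↥L
    obtain ⟨v, hv0, hvgen⟩ := (finrank_eq_one_iff' (K := ℂ) (V := ↥L)).mp hL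
    have hvne : (v : ↥(Stmt10.V K χ)) ≠ 0 := by
      simpa using hv0
    refine ⟨v.1, hvne, v.2, ?_, ?_⟩
    · apply le_antisymm
      · intro x hx
        obtain ⟨c, hc⟩ := hvgen ⟨x, hx⟩
        exact mem_span_singleton.mpr ⟨c, congrArg Subtype.val hc⟩
      · rw [span_le, Set.singleton_subset_iff]
        exact v.2
    · by_contra hcon
      push_neg at hcon
      apply hvne
      apply hextv
      intro i
      rw [hcon i, map_zero]
  -- characterization of the invariant lines
  have hRHSchar : ∀ L : Submodule ℂ ↥(Stmt10.V K χ),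
      (finrank ℂ ↥L = 1 ∧ ∀ a : Fin n → C, Submodule.map (Stmt10.ρ K χ (inl a)) L = L) ↔
      ∃ i, L = LL i := by
    intro L
    constructor
    · rintro ⟨hfin, hinv⟩
      obtain ⟨v, hv0, hvL, hLs, i, hevi⟩ := hgen L hfin
      refine ⟨i, htail L v hLs i hevi ?_⟩
      intro j hj
      by_contra hevj
      set a : Fin n → C := fun m => if m = i then ζC else 1 with ha
      have hmem : Stmt10.ρ K χ (inl a) v ∈ L := by
        rw [← hinv a]; exact Submodule.mem_map_of_mem hvL
      rw [hLs] at hmem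
      obtain ⟨c, hc⟩ := mem_span_singleton.mp hmem
      have e1 := congrArg (ev i) hc
      have e2 := congrArg (ev j) hc
      rw [map_smul, smul_eq_mul, hevρ] at e1
      rw [map_smul, smul_eq_mul, hevρ] at e2
      have hai : ((a i : ℂˣ) : ℂ) = (ζ : ℂ) := by rw [ha]; simp [hζC]
      have haj : ((a j : ℂˣ) : ℂ) = 1 := by rw [ha]; simp [hj]
      rw [hai] at e1
      rw [haj, one_mul] at e2
      have hc1 : c = 1 := mul_right_cancel₀ hevj (e2.trans (one_mul _).symm)
      rw [hc1, one_mul] at e1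
      exact hζ1 (mul_right_cancel₀ hevi ((one_mul _).trans e1)).symm
    · rintro ⟨i, rfl⟩
      refine ⟨hfinLL i, fun a => ?_⟩
      have h1 := hmapLL (inl a) i
      simpa using h1
  intro M idec
  constructor
  · rintro ⟨h1, h2, h3⟩
    have hind := h3.submodule_iSupIndep
    have hMsub : ∀ L, L ∈ M → ∃ i, L = LL i := by
      intro L hL
      obtain ⟨v, hv0, hvL, hLs, i, hevi⟩ := hgen L (h1 L hL)
      refine ⟨i, htail L v hLs i hevi ?_⟩
      intro j hj
      by_contra hevj
      set a1 : Fin n → C := fun m => if m = j then ζC else 1 with ha1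
      set a2 : Fin n → C := fun m => if m = j then ζC ^ 2 else 1 with ha2
      have hL1 : Submodule.map (Stmt10.ρ K χ (inl a1)) L ∈ M := h2 _ L hL
      have hL2 : Submodule.map (Stmt10.ρ K χ (inl a2)) L ∈ M := h2 _ L hL
      have hev1 : ∀ m, ev m (Stmt10.ρ K χ (inl a1) v)
          = (if m = j then (ζ : ℂ) else 1) * ev m v := by
        intro m; rw [hevρ]; congr 1
        rw [ha1]; by_cases hm : m = j
        · simp [hm, hζC]
        · simp [hm]
      have hev2 : ∀ m, ev m (Stmt10.ρ K χ (inl a2) v)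
          = (if m = j then (ζ : ℂ) ^ 2 else 1) * ev m v := by
        intro m; rw [hevρ]; congr 1
        rw [ha2]; by_cases hm : m = j
        · simp [hm, hζC]
        · simp [hm]
      have hne1 : Submodule.map (Stmt10.ρ K χ (inl a1)) L ≠ L := by
        intro he
        have hm : Stmt10.ρ K χ (inl a1) v ∈ (ℂ ∙ v) := by
          rw [← hLs, ← he]; exact Submodule.mem_map_of_mem hvL
        obtain ⟨c, hc⟩ := mem_span_singleton.mp hm
        have e1 := congrArg (ev i) hc
        have e2 := congrArg (ev j) hc
        rw [map_smul, smul_eq_mul, hev1, if_neg (Ne.symm hj), one_mul] at e1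
        rw [map_smul, smul_eq_mul, hev1, if_pos rfl] at e2
        have hc1 : c = 1 := mul_right_cancel₀ hevi (e1.trans (one_mul _).symm)
        rw [hc1, one_mul] at e2
        exact hζ1 (mul_right_cancel₀ hevj ((one_mul _).trans e2)).symm
      have hne2 : Submodule.map (Stmt10.ρ K χ (inl a2)) L ≠ L := by
        intro he
        have hm : Stmt10.ρ K χ (inl a2) v ∈ (ℂ ∙ v) := by
          rw [← hLs, ← he]; exact Submodule.mem_map_of_mem hvL
        obtain ⟨c, hc⟩ := mem_span_singleton.mp hm
        have e1 := congrArg (ev i) hc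
        have e2 := congrArg (ev j) hc
        rw [map_smul, smul_eq_mul, hev2, if_neg (Ne.symm hj), one_mul] at e1
        rw [map_smul, smul_eq_mul, hev2, if_pos rfl] at e2
        have hc1 : c = 1 := mul_right_cancel₀ hevi (e1.trans (one_mul _).symm)
        rw [hc1, one_mul] at e2
        exact hζ2 (mul_right_cancel₀ hevj ((one_mul _).trans e2)).symm
      have hζne : (ζ : ℂ) - (ζ : ℂ) ^ 2 ≠ 0 := by
        intro h
        rw [sub_eq_zero] at h
        have h2 : (ζ : ℂ) * 1 = (ζ : ℂ) * (ζ : ℂ) := by linear_combination h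
        exact hζ1 (mul_left_cancel₀ hζ0 h2).symm
      set α : ℂ := (1 - (ζ : ℂ) ^ 2) / ((ζ : ℂ) - (ζ : ℂ) ^ 2) with hα
      have hαβ : α * (ζ : ℂ) + (1 - α) * (ζ : ℂ) ^ 2 = 1 := by
        rw [hα]; field_simp; ring
      have hvcomb : v = α • (Stmt10.ρ K χ (inl a1) v) + (1 - α) • (Stmt10.ρ K χ (inl a2) v) := by
        apply hextv
        intro m
        rw [map_add, map_smul, map_smul, smul_eq_mul, smul_eq_mul, hev1, hev2]
        by_cases hm : m = j
        · rw [if_pos hm, if_pos hm]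
          linear_combination (-(ev m v)) * hαβ
        · rw [if_neg hm, if_neg hm]; ring
      have hdisj := hind ⟨L, hL⟩
      have hsub : Submodule.map (Stmt10.ρ K χ (inl a1)) L ⊔ Submodule.map (Stmt10.ρ K χ (inl a2)) L
          ≤ ⨆ (L' : M) (_ : L' ≠ ⟨L, hL⟩), (L' : Submodule ℂ ↥(Stmt10.V K χ)) := by
        apply sup_le
        · exact le_iSup₂ (f := fun (L' : M) (_ : L' ≠ (⟨L, hL⟩ : M)) =>
            (L' : Submodule ℂ ↥(Stmt10.V K χ)))
            ⟨_, hL1⟩ (by simp only [ne_eq, Subtype.mk.injEq]; exact hne1)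
        · exact le_iSup₂ (f := fun (L' : M) (_ : L' ≠ (⟨L, hL⟩ : M)) =>
            (L' : Submodule ℂ ↥(Stmt10.V K χ)))
            ⟨_, hL2⟩ (by simp only [ne_eq, Subtype.mk.injEq]; exact hne2)
      have hvsup : v ∈ (⨆ (L' : M) (_ : L' ≠ ⟨L, hL⟩), (L' : Submodule ℂ ↥(Stmt10.V K χ))) := by
        apply hsub
        rw [hvcomb]
        exact add_mem
          (Submodule.smul_mem _ _ (Submodule.mem_sup_left (Submodule.mem_map_of_mem hvL)))
          (Submodule.smul_mem _ _ (Submodule.mem_sup_right (Submodule.mem_map_of_mem hvL)))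
      exact hv0 ((Submodule.disjoint_def.mp hdisj) v hvL hvsup)
    ext L
    simp only [Set.mem_setOf_eq]
    constructor
    · intro hL
      exact (hRHSchar L).mpr (hMsub L hL)
    · intro hfi
      obtain ⟨i, hLi⟩ := (hRHSchar L).mp hfi
      rw [hLi]
      by_contra hnot
      have hker : ∀ L' : M, (L' : Submodule ℂ ↥(Stmt10.V K χ)) ≤ LinearMap.ker (ev i) := by
        intro L'
        obtain ⟨jj, hjj⟩ := hMsub L'.1 L'.2
        have hji : jj ≠ i := by
          intro h
          apply hnot
          rw [← h, ← hjj]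
          exact L'.2
        rw [hjj, hLL]
        show (ℂ ∙ F jj) ≤ _
        rw [span_le, Set.singleton_subset_iff]
        simp only [SetLike.mem_coe, LinearMap.mem_ker]
        rw [hevF]
        exact if_neg (fun hh => hji hh.symm)
      have htop := h3.submodule_iSup_eq_top
      have hFi : F i ∈ (⨆ (L' : M), (L' : Submodule ℂ ↥(Stmt10.V K χ))) := by
        rw [htop]; trivial
      have hcon : F i ∈ LinearMap.ker (ev i) := (iSup_le hker) hFi
      rw [LinearMap.mem_ker, hevF, if_pos rfl] at hcon
      exact one_ne_zero hcon
  · intro hM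
    have hmem : ∀ L : Submodule ℂ ↥(Stmt10.V K χ), L ∈ M ↔ ∃ i, L = LL i := by
      intro L
      rw [hM, Set.mem_setOf_eq]
      exact hRHSchar L
    refine ⟨fun L hL => ?_, fun w L hL => ?_, ?_⟩
    · obtain ⟨i, rfl⟩ := (hmem L).mp hL
      exact hfinLL i
    · obtain ⟨i, rfl⟩ := (hmem L).mp hL
      rw [hmapLL]
      exact (hmem _).mpr ⟨_, rfl⟩
    · rw [DirectSum.isInternal_submodule_iff_iSupIndep_and_iSup_eq_top]
      let e : Fin n → ↥M := fun i => ⟨LL i, (hmem _).mpr ⟨i, rfl⟩⟩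
      have hesurj : Function.Surjective e := by
        rintro ⟨L, hL⟩
        obtain ⟨i, rfl⟩ := (hmem L).mp hL
        exact ⟨i, Subtype.ext rfl⟩
      constructor
      · exact iSupIndep.comp' (f := e) hLLindep hesurj
      · apply le_antisymm le_top
        intro f _
        have hsum : (∑ i, ev i f • F i) ∈ (⨆ (L' : M), (L' : Submodule ℂ ↥(Stmt10.V K χ))) := by
          apply Submodule.sum_mem
          intro i _
          apply Submodule.smul_mem
          have h1 : F i ∈ LL i := mem_span_singleton_self _
          exact le_iSup (fun L' : M => (L' : Submodule ℂ ↥(Stmt10.V K χ))) (e i) h1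
        rwa [← hrepr f] at hsum
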